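/- Let T be a balanced tree with k levels (k ≥ 2) and L its graph Laplacian. If f is a function on the vertices with Lf = λf and f(v) ≠ 0 for every vertex v, then λ is a simple eigenvalue of L and f is stratified. -/

import Mathlib

open scoped Classical

/-- Vertices of the balanced tree with `k` levels and branching sequence `c`:
a vertex at level `l` (`0 ≤ l ≤ k-1`) is a function assigning to each `i < l` a
label in `Fin (c i)` (the label of the level-`(i+1)` ancestor among its siblings). -/
abbrev BTVert (k : ℕ) (c : ℕ → ℕ) : Type := Σ l : Fin k, ∀ i : Fin l.val, Fin (c i.val)

/-- `p` is the parent of `v` in the balanced tree. -/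
def IsParentOf {k : ℕ} {c : ℕ → ℕ} (p v : BTVert k c) : Prop :=
  ∃ h : p.1.val + 1 = v.1.val,
    ∀ i : Fin p.1.val, v.2 ⟨i.val, by have := i.isLt; omega⟩ = p.2 i

/-- The balanced tree as a simple graph: each non-root vertex is adjacent to its parent. -/
def btGraph (k : ℕ) (c : ℕ → ℕ) : SimpleGraph (BTVert k c) where
  Adj u v := IsParentOf u v ∨ IsParentOf v u
  symm := ⟨fun u v h => h.symm⟩
  loopless := ⟨fun v h => by
    rcases h with ⟨h, -⟩ | ⟨h, -⟩ <;> omega⟩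

/-- The root (the unique vertex at level 0). -/
def btRoot (k : ℕ) (c : ℕ → ℕ) (hk : 0 < k) : BTVert k c :=
  ⟨⟨0, hk⟩, fun i => i.elim0⟩

/-- `u` belongs to the maximal subtree rooted at `v` (`u` is `v` or a descendant of `v`). -/
def InSubtree {k : ℕ} {c : ℕ → ℕ} (v u : BTVert k c) : Prop :=
  ∃ h : v.1.val ≤ u.1.val,
    ∀ i : Fin v.1.val, u.2 ⟨i.val, by have := i.isLt; omega⟩ = v.2 i

/-- A function on the vertices is stratified if it only depends on the level. -/
def Stratified {k : ℕ} {c : ℕ → ℕ} (f : BTVert k c → ℝ) : Prop :=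
  ∀ u v : BTVert k c, u.1 = v.1 → f u = f v

/-- Number of vertices at level `l`: `n(l) = c(0) ⋯ c(l-1)`. -/
def nlev (c : ℕ → ℕ) (l : ℕ) : ℕ := ∏ i ∈ Finset.range l, c i

/-- The common degree `d(l)` of the vertices at level `l`. -/
def branchDeg (k : ℕ) (c : ℕ → ℕ) (l : ℕ) : ℕ :=
  if l = 0 then c 0 else if l = k - 1 then 1 else c l + 1

/-- The symmetric tridiagonal matrix `T^{(l0)}` with diagonal `d(l0), …, d(k-1)` and
off-diagonal `√c(l0), …, √c(k-2)`. -/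
noncomputable def matT (k : ℕ) (c : ℕ → ℕ) (l0 : ℕ) :
    Matrix (Fin (k - l0)) (Fin (k - l0)) ℝ := fun i j =>
  if i = j then (branchDeg k c (l0 + i.val) : ℝ)
  else if i.val + 1 = j.val then Real.sqrt (c (l0 + i.val))
  else if j.val + 1 = i.val then Real.sqrt (c (l0 + j.val))
  else 0

/-- The tridiagonal matrix `S^{(l0)}` with diagonal `d(l0), …, d(k-1)`, subdiagonal
entries `-1` and superdiagonal entries `-c(l0), …, -c(k-2)`. -/
def matS (k : ℕ) (c : ℕ → ℕ) (l0 : ℕ) :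
    Matrix (Fin (k - l0)) (Fin (k - l0)) ℝ := fun i j =>
  if i = j then (branchDeg k c (l0 + i.val) : ℝ)
  else if i.val + 1 = j.val then -(c (l0 + i.val) : ℝ)
  else if j.val + 1 = i.val then -1
  else 0

/-- `lam` is an eigenvalue of the matrix `A`. -/
def IsEigenvalue {V : Type*} [Fintype V] (A : Matrix V V ℝ) (lam : ℝ) : Prop :=
  ∃ f : V → ℝ, f ≠ 0 ∧ A.mulVec f = lam • f

/-- The (geometric) multiplicity of `lam` as an eigenvalue of `A`. -/
noncomputable def eigMult {V : Type*} [Fintype V] (A : Matrix V V ℝ) (lam : ℝ) : ℕ :=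
  Module.finrank ℝ
    ↥(LinearMap.ker (A.mulVecLin - lam • (LinearMap.id : (V → ℝ) →ₗ[ℝ] (V → ℝ))))

/-- The Dirichlet Laplacian on a subset `Ω` of the vertices of the balanced tree:
the principal submatrix of the Laplacian with rows and columns indexed by `Ω`. -/
noncomputable def dirichletLap (k : ℕ) (c : ℕ → ℕ) (Ω : Set (BTVert k c)) :
    Matrix Ω Ω ℝ := fun u v => (btGraph k c).lapMatrix ℝ u.1 v.1

/-! ### Auxiliary development -/

section Aux

variable {k : ℕ} {c : ℕ → ℕ}

/-- The parent of a non-root vertex. -/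
def parentV (v : BTVert k c) (h : 1 ≤ v.1.val) : BTVert k c :=
  ⟨⟨v.1.val - 1, by have := v.1.isLt; omega⟩,
    fun i => v.2 ⟨i.val, by have : i.val < v.1.val - 1 := i.isLt; omega⟩⟩

/-- The `a`-th child of a non-leaf vertex. -/
def childV (v : BTVert k c) (h : v.1.val + 1 < k) (a : Fin (c v.1.val)) : BTVert k c :=
  ⟨⟨v.1.val + 1, h⟩, fun i =>
    if hi : i.val < v.1.val then v.2 ⟨i.val, hi⟩
    else Fin.cast (congrArg c (by have : i.val < v.1.val + 1 := i.isLt; omega : v.1.val = i.val)) a⟩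

theorem btvert_ext {v w : BTVert k c} (h : v.1.val = w.1.val)
    (h2 : ∀ (i : ℕ) (hv : i < v.1.val) (hw : i < w.1.val), v.2 ⟨i, hv⟩ = w.2 ⟨i, hw⟩) :
    v = w := by
  obtain ⟨⟨lv, hlv⟩, fv⟩ := v
  obtain ⟨⟨lw, hlw⟩, fw⟩ := w
  simp only at h
  subst h
  have : fv = fw := funext fun i => h2 i.val i.isLt i.isLt
  subst this
  rfl

theorem isParentOf_parentV (v : BTVert k c) (h : 1 ≤ v.1.val) :
    IsParentOf (parentV v h) v :=
  ⟨show v.1.val - 1 + 1 = v.1.val by omega, fun _ => rfl⟩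

theorem parent_eq {p v : BTVert k c} (hp : IsParentOf p v) (h : 1 ≤ v.1.val) :
    p = parentV v h := by
  obtain ⟨he, hcomp⟩ := hp
  exact btvert_ext (show p.1.val = v.1.val - 1 by omega)
    (fun i hv hw => (hcomp ⟨i, hv⟩).symm)

theorem isParentOf_childV (v : BTVert k c) (h : v.1.val + 1 < k) (a : Fin (c v.1.val)) :
    IsParentOf v (childV v h a) := by
  refine ⟨rfl, fun i => ?_⟩
  show dite _ _ _ = _
  rw [dif_pos i.isLt]

theorem parentV_childV (v : BTVert k c) (h : v.1.val + 1 < k) (a : Fin (c v.1.val))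
    (h1 : 1 ≤ (childV v h a).1.val) :
    parentV (childV v h a) h1 = v := by
  refine btvert_ext (show v.1.val + 1 - 1 = v.1.val by omega) fun i hv hw => ?_
  show dite _ _ _ = _
  rw [dif_pos hw]

theorem child_eq {v u : BTVert k c} (hp : IsParentOf v u) :
    ∃ (h : v.1.val + 1 < k) (a : Fin (c v.1.val)), u = childV v h a := by
  obtain ⟨he, hcomp⟩ := hp
  have hlt : v.1.val + 1 < k := he ▸ u.1.isLt
  refine ⟨hlt, u.2 ⟨v.1.val, by omega⟩, ?_⟩
  refine btvert_ext (show u.1.val = v.1.val + 1 by omega) fun i hv hw => ?_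
  show _ = dite _ _ _
  by_cases hi : i < v.1.val
  · rw [dif_pos hi]
    exact hcomp ⟨i, hi⟩
  · rw [dif_neg hi]
    have hie : i = v.1.val := by omega
    subst hie
    apply Fin.ext
    simp

theorem childV_injective (v : BTVert k c) (h : v.1.val + 1 < k) :
    Function.Injective (childV v h) := by
  have key : ∀ x : Fin (c v.1.val),
      (if hlt : v.1.val < (childV v h x).1.val
        then ((childV v h x).2 ⟨v.1.val, hlt⟩).val else 0) = x.val := by
    intro x
    rw [dif_pos (show v.1.val < (childV v h x).1.val from Nat.lt_succ_self _)]
    show (dite _ _ _ : Fin _).val = _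
    rw [dif_neg (lt_irrefl _)]
    rfl
  intro a b hab
  apply Fin.ext
  rw [← key a, ← key b, hab]

/-- Neighbor set of a leaf. -/
theorem neighborFinset_leaf (v : BTVert k c) (h1 : 1 ≤ v.1.val) (h2 : v.1.val + 1 = k) :
    (btGraph k c).neighborFinset v = {parentV v h1} := by
  ext u
  simp only [SimpleGraph.mem_neighborFinset, Finset.mem_singleton]
  show IsParentOf v u ∨ IsParentOf u v ↔ _
  constructor
  · rintro (hp | hp)
    · obtain ⟨hlt, a, rfl⟩ := child_eq hp
      omega
    · exact parent_eq hp h1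
  · rintro rfl
    exact Or.inr (isParentOf_parentV v h1)

/-- Neighbor set of an internal (non-root, non-leaf) vertex. -/
theorem neighborFinset_internal (v : BTVert k c) (h1 : 1 ≤ v.1.val) (h2 : v.1.val + 1 < k) :
    (btGraph k c).neighborFinset v =
      insert (parentV v h1) (Finset.image (childV v h2) Finset.univ) := by
  ext u
  simp only [SimpleGraph.mem_neighborFinset, Finset.mem_insert, Finset.mem_image,
    Finset.mem_univ, true_and]
  show IsParentOf v u ∨ IsParentOf u v ↔ _
  constructor
  · rintro (hp | hp)
    · obtain ⟨hlt, a, rfl⟩ := child_eq hp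
      exact Or.inr ⟨a, rfl⟩
    · exact Or.inl (parent_eq hp h1)
  · rintro (rfl | ⟨a, rfl⟩)
    · exact Or.inr (isParentOf_parentV v h1)
    · exact Or.inl (isParentOf_childV v h2 a)

theorem parentV_not_mem_children (v : BTVert k c) (h1 : 1 ≤ v.1.val) (h2 : v.1.val + 1 < k) :
    parentV v h1 ∉ Finset.image (childV v h2) Finset.univ := by
  intro hmem
  obtain ⟨a, -, ha⟩ := Finset.mem_image.1 hmem
  have h3 : (childV v h2 a).1.val = (parentV v h1).1.val := by rw [ha]
  have h4 : v.1.val + 1 = v.1.val - 1 := h3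
  omega

theorem eigen_eq {lam : ℝ} {g : BTVert k c → ℝ}
    (hg : ((btGraph k c).lapMatrix ℝ).mulVec g = lam • g) (v : BTVert k c) :
    lam * g v = ((btGraph k c).degree v : ℝ) * g v
      - ∑ u ∈ (btGraph k c).neighborFinset v, g u := by
  have h := congrFun hg v
  rw [SimpleGraph.lapMatrix_mulVec_apply] at h
  simpa using h.symm

theorem eigen_eq_leaf {lam : ℝ} {g : BTVert k c → ℝ}
    (hg : ((btGraph k c).lapMatrix ℝ).mulVec g = lam • g) (v : BTVert k c)
    (h1 : 1 ≤ v.1.val) (h2 : v.1.val + 1 = k) :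
    lam * g v = g v - g (parentV v h1) := by
  have h := eigen_eq hg v
  rw [show (btGraph k c).degree v = ((btGraph k c).neighborFinset v).card from rfl] at h
  rw [neighborFinset_leaf v h1 h2] at h
  simpa using h

theorem eigen_eq_internal {lam : ℝ} {g : BTVert k c → ℝ}
    (hg : ((btGraph k c).lapMatrix ℝ).mulVec g = lam • g) (v : BTVert k c)
    (h1 : 1 ≤ v.1.val) (h2 : v.1.val + 1 < k) :
    lam * g v = ((c v.1.val : ℝ) + 1) * g v - g (parentV v h1)
      - ∑ a : Fin (c v.1.val), g (childV v h2 a) := by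
  have h := eigen_eq hg v
  rw [show (btGraph k c).degree v = ((btGraph k c).neighborFinset v).card from rfl] at h
  rw [neighborFinset_internal v h1 h2] at h
  rw [Finset.card_insert_of_notMem (parentV_not_mem_children v h1 h2),
    Finset.sum_insert (parentV_not_mem_children v h1 h2),
    Finset.card_image_of_injective _ (childV_injective v h2),
    Finset.sum_image (fun a _ b _ hab => childV_injective v h2 hab)] at h
  simp only [Finset.card_univ, Fintype.card_fin] at h
  rw [h]
  push_cast
  ring

/-- A vertex at each level `l < k` (needs branching numbers positive). -/
def vexists (hc : ∀ l, l ≤ k - 2 → 1 ≤ c l) (l : ℕ) (hl : l < k) : BTVert k c :=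
  ⟨⟨l, hl⟩, fun i => ⟨0, hc i.val (by have : i.val < l := i.isLt; omega)⟩⟩

end Aux

/-- The auxiliary sequence defining the continued-fraction coefficients, indexed from
the bottom of the tree. -/
noncomputable def Eseq (k : ℕ) (c : ℕ → ℕ) (lam : ℝ) : ℕ → ℝ
  | 0 => 1 - lam
  | j + 1 => (c (k - 2 - j) : ℝ) + 1 - lam - (c (k - 2 - j) : ℝ) * (Eseq k c lam j)⁻¹

/-- `Dseq l` is the ratio `f(parent(v))/f(v)` for `v` at level `l`. -/
noncomputable def Dseq (k : ℕ) (c : ℕ → ℕ) (lam : ℝ) (l : ℕ) : ℝ :=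
  Eseq k c lam (k - 1 - l)

theorem Dseq_top {k : ℕ} (hk : 2 ≤ k) (c : ℕ → ℕ) (lam : ℝ) :
    Dseq k c lam (k - 1) = 1 - lam := by
  rw [Dseq, show k - 1 - (k - 1) = 0 by omega, Eseq]

theorem Dseq_step {k : ℕ} (hk : 2 ≤ k) (c : ℕ → ℕ) (lam : ℝ) {l : ℕ}
    (h1 : 1 ≤ l) (h2 : l ≤ k - 2) :
    Dseq k c lam l = (c l : ℝ) + 1 - lam - (c l : ℝ) * (Dseq k c lam (l + 1))⁻¹ := by
  rw [Dseq, show k - 1 - l = (k - 2 - l) + 1 by omega, Eseq,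
    show k - 2 - (k - 2 - l) = l by omega, Dseq, show k - 1 - (l + 1) = k - 2 - l by omega]

/-- Main downward induction: the ratio recursion holds for every eigenfunction, and the
denominators are nonzero thanks to the nowhere-vanishing eigenfunction `f`. -/
theorem key_lemma (k : ℕ) (hk : 2 ≤ k) (c : ℕ → ℕ)
    (hc : ∀ l, l ≤ k - 2 → 1 ≤ c l) (lam : ℝ) (f : BTVert k c → ℝ)
    (hf : ((btGraph k c).lapMatrix ℝ).mulVec f = lam • f)
    (hfz : ∀ v : BTVert k c, f v ≠ 0) :
    ∀ m l, l = k - 1 - m → 1 ≤ l →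
      Dseq k c lam l ≠ 0 ∧
      ∀ g : BTVert k c → ℝ, ((btGraph k c).lapMatrix ℝ).mulVec g = lam • g →
        ∀ v : BTVert k c, v.1.val = l → ∀ h1 : 1 ≤ v.1.val,
          Dseq k c lam l * g v = g (parentV v h1) := by
  intro m
  induction m with
  | zero =>
    intro l hl h1
    have hlk : l = k - 1 := by omega
    subst hlk
    have heq : ∀ g : BTVert k c → ℝ, ((btGraph k c).lapMatrix ℝ).mulVec g = lam • g →
        ∀ v : BTVert k c, v.1.val = k - 1 → ∀ hv1 : 1 ≤ v.1.val,
          Dseq k c lam (k - 1) * g v = g (parentV v hv1) := by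
      intro g hg v hv hv1
      have h := eigen_eq_leaf hg v hv1 (by omega)
      rw [Dseq_top hk]
      linear_combination -h
    refine ⟨?_, heq⟩
    intro hD
    have hthis := heq f hf (vexists hc (k - 1) (by omega)) rfl
      (show 1 ≤ k - 1 by omega)
    rw [hD, zero_mul] at hthis
    exact hfz _ hthis.symm
  | succ m ih =>
    intro l hl h1
    have hl2 : l ≤ k - 2 := by omega
    have hstep : l + 1 = k - 1 - m := by omega
    obtain ⟨ihD, ihEq⟩ := ih (l + 1) hstep (by omega)
    have heq : ∀ g : BTVert k c → ℝ, ((btGraph k c).lapMatrix ℝ).mulVec g = lam • g →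
        ∀ v : BTVert k c, v.1.val = l → ∀ hv1 : 1 ≤ v.1.val,
          Dseq k c lam l * g v = g (parentV v hv1) := by
      intro g hg v hv hv1
      have h2 : v.1.val + 1 < k := by omega
      have h := eigen_eq_internal hg v hv1 h2
      have hchild : ∀ a : Fin (c v.1.val),
          g (childV v h2 a) = (Dseq k c lam (l + 1))⁻¹ * g v := by
        intro a
        have hthis := ihEq g hg (childV v h2 a) (show v.1.val + 1 = l + 1 by omega)
          (show 1 ≤ v.1.val + 1 by omega)
        replace hthis := hthis.trans (congrArg g (parentV_childV v h2 a _))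
        rw [inv_mul_eq_div, eq_div_iff ihD]
        linear_combination hthis
      rw [Finset.sum_congr rfl (fun a _ => hchild a), Finset.sum_const, Finset.card_univ,
        Fintype.card_fin, nsmul_eq_mul] at h
      rw [Dseq_step hk c lam h1 hl2]
      rw [hv] at h
      linear_combination -h
    refine ⟨?_, heq⟩
    intro hD
    have hthis := heq f hf (vexists hc l (by omega)) rfl (show 1 ≤ l by omega)
    rw [hD, zero_mul] at hthis
    exact hfz _ hthis.symm

/-- The level profile: `Cseq l` is `f(v)/f(root)` for `v` at level `l`. -/
noncomputable def Cseq (k : ℕ) (c : ℕ → ℕ) (lam : ℝ) : ℕ → ℝ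
  | 0 => 1
  | l + 1 => (Dseq k c lam (l + 1))⁻¹ * Cseq k c lam l

theorem chain_lemma (k : ℕ) (hk : 2 ≤ k) (c : ℕ → ℕ)
    (hc : ∀ l, l ≤ k - 2 → 1 ≤ c l) (lam : ℝ) (f : BTVert k c → ℝ)
    (hf : ((btGraph k c).lapMatrix ℝ).mulVec f = lam • f)
    (hfz : ∀ v : BTVert k c, f v ≠ 0)
    (g : BTVert k c → ℝ) (hg : ((btGraph k c).lapMatrix ℝ).mulVec g = lam • g) :
    ∀ l (v : BTVert k c), v.1.val = l →
      g v = Cseq k c lam l * g (btRoot k c (by omega)) := by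
  intro l
  induction l with
  | zero =>
    intro v hv
    have hvr : v = btRoot k c (by omega) := by
      refine btvert_ext (show v.1.val = 0 from hv) fun i hv' hw => ?_
      exact absurd (show i < 0 from hw) (by omega)
    rw [hvr, Cseq, one_mul]
  | succ l ihl =>
    intro v hv
    have hv1 : 1 ≤ v.1.val := by omega
    obtain ⟨hD, hEq⟩ := key_lemma k hk c hc lam f hf hfz (k - 1 - (l + 1)) (l + 1)
      (by have := v.1.isLt; omega) (by omega)
    have h := hEq g hg v hv hv1
    have hp : (parentV v hv1).1.val = l := by show v.1.val - 1 = l; omega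
    rw [ihl (parentV v hv1) hp] at h
    rw [Cseq, mul_assoc, ← h, inv_mul_cancel_left₀ hD]

/-- a nowhere-vanishing Laplacian eigenfunction on a balanced tree belongs to a
simple eigenvalue and is stratified. -/
theorem nowhere_zero_eigenfunction_stratified (k : ℕ) (hk : 2 ≤ k) (c : ℕ → ℕ)
    (hc : ∀ l, l ≤ k - 2 → 1 ≤ c l) (lam : ℝ) (f : BTVert k c → ℝ)
    (hf : ((btGraph k c).lapMatrix ℝ).mulVec f = lam • f)
    (hfz : ∀ v : BTVert k c, f v ≠ 0) :
    eigMult ((btGraph k c).lapMatrix ℝ) lam = 1 ∧ Stratified f := by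
  have hf0 : f ≠ 0 := fun h => hfz (btRoot k c (by omega)) (by rw [h]; rfl)
  have chain := chain_lemma k hk c hc lam f hf hfz
  have chainf := chain f hf
  constructor
  · have hker : LinearMap.ker (((btGraph k c).lapMatrix ℝ).mulVecLin
        - lam • (LinearMap.id : (BTVert k c → ℝ) →ₗ[ℝ] (BTVert k c → ℝ)))
        = Submodule.span ℝ {f} := by
      apply le_antisymm
      · intro g hg
        rw [LinearMap.mem_ker, LinearMap.sub_apply, LinearMap.smul_apply, LinearMap.id_apply,
          sub_eq_zero, Matrix.mulVecLin_apply] at hg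
        rw [Submodule.mem_span_singleton]
        refine ⟨g (btRoot k c (by omega)) / f (btRoot k c (by omega)), ?_⟩
        funext v
        have h1 := chain g hg v.1.val v rfl
        have h2 := chainf v.1.val v rfl
        simp only [Pi.smul_apply, smul_eq_mul]
        rw [h1, h2]
        field_simp [hfz (btRoot k c (by omega))]
      · rw [Submodule.span_singleton_le_iff_mem, LinearMap.mem_ker, LinearMap.sub_apply,
          LinearMap.smul_apply, LinearMap.id_apply, sub_eq_zero, Matrix.mulVecLin_apply]
        exact hf
    unfold eigMult
    rw [hker]
    exact finrank_span_singleton hf0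
  · intro u v huv
    rw [chainf u.1.val u rfl, chainf v.1.val v rfl, show u.1.val = v.1.val from congrArg Fin.val huv]
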